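/- (Lemma 5 / Lemma L4.) If Problem (SLQ) is open-loop solvable (an open-loop optimal control exists for every initial state x₀ ∈ ℝⁿ), then the homogeneous Problem (SLQ)⁰ is also open-loop solvable (for every x₀ ∈ ℝⁿ there is an admissible control minimizing J⁰(x₀,·)). -/

import Mathlib

open MeasureTheory ProbabilityTheory Matrix Finset Filter Topology

namespace SLQ

/-- Data of the discrete-time stochastic LQ problem. -/
structure Setup (Ω : Type) [MeasurableSpace Ω] (n m N : ℕ) where
  w : ℕ → Ω → ℝ
  A : ℕ → Matrix (Fin n) (Fin n) ℝ
  B : ℕ → Matrix (Fin n) (Fin m) ℝ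
  C : ℕ → Matrix (Fin n) (Fin n) ℝ
  D : ℕ → Matrix (Fin n) (Fin m) ℝ
  Q : ℕ → Matrix (Fin n) (Fin n) ℝ
  S : ℕ → Matrix (Fin m) (Fin n) ℝ
  R : ℕ → Matrix (Fin m) (Fin m) ℝ
  H : Matrix (Fin n) (Fin n) ℝ
  b : ℕ → Ω → Fin n → ℝ
  sig : ℕ → Ω → Fin n → ℝ
  q : ℕ → Ω → Fin n → ℝ
  rho : ℕ → Ω → Fin m → ℝ
  g : Ω → Fin n → ℝ

variable {Ω : Type} [MeasurableSpace Ω] {n m N : ℕ}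

/-- `Filt 𝒮 t` is the σ-algebra `𝒻_{t-1} = σ(w_0, …, w_{t-1})`; in particular
`Filt 𝒮 0` is the trivial σ-algebra `𝒻_{-1}`. -/
def Filt (𝒮 : Setup Ω n m N) (t : ℕ) : MeasurableSpace Ω :=
  ⨆ i ∈ Finset.range t, MeasurableSpace.comap (𝒮.w i) inferInstance

/-- Standing hypotheses on the data: the noises are measurable, independent, centred with
unit variance; the random coefficients are adapted and square integrable; the weighting
matrices are symmetric. -/
def Valid (𝒮 : Setup Ω n m N) (μ : Measure Ω) : Prop :=
  (∀ t, t < N → Measurable (𝒮.w t)) ∧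
  iIndepFun (fun i : Fin N => 𝒮.w i) μ ∧
  (∀ t, t < N → ∫ ω, 𝒮.w t ω ∂μ = 0) ∧
  (∀ t, t < N → ∫ ω, (𝒮.w t ω) ^ 2 ∂μ = 1) ∧
  (∀ t, t < N → Measurable[Filt 𝒮 t] (𝒮.b t) ∧ MemLp (𝒮.b t) 2 μ) ∧
  (∀ t, t < N → Measurable[Filt 𝒮 t] (𝒮.sig t) ∧ MemLp (𝒮.sig t) 2 μ) ∧
  (∀ t, t < N → Measurable[Filt 𝒮 t] (𝒮.q t) ∧ MemLp (𝒮.q t) 2 μ) ∧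
  (∀ t, t < N → Measurable[Filt 𝒮 t] (𝒮.rho t) ∧ MemLp (𝒮.rho t) 2 μ) ∧
  (Measurable[Filt 𝒮 N] 𝒮.g ∧ MemLp 𝒮.g 2 μ) ∧
  (∀ t, t < N → (𝒮.Q t).IsSymm ∧ (𝒮.R t).IsSymm) ∧ 𝒮.H.IsSymm

/-- Admissible (open-loop) controls: square integrable and `𝒻_{t-1}`-adapted. -/
def Admissible (𝒮 : Setup Ω n m N) (μ : Measure Ω) (u : ℕ → Ω → Fin m → ℝ) : Prop :=
  ∀ t, t < N → Measurable[Filt 𝒮 t] (u t) ∧ MemLp (u t) 2 μ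

/-- The state trajectory `x_0 = x₀`, `x_{t+1} = A_t x_t + B_t u_t + b_t + (C_t x_t + D_t u_t + σ_t) w_t`. -/
def traj (𝒮 : Setup Ω n m N) (x₀ : Fin n → ℝ) (u : ℕ → Ω → Fin m → ℝ) : ℕ → Ω → Fin n → ℝ
  | 0 => fun _ => x₀
  | t + 1 => fun ω =>
      (𝒮.A t).mulVec (traj 𝒮 x₀ u t ω) + (𝒮.B t).mulVec (u t ω) + 𝒮.b t ω
        + 𝒮.w t ω • ((𝒮.C t).mulVec (traj 𝒮 x₀ u t ω) + (𝒮.D t).mulVec (u t ω) + 𝒮.sig t ω)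

/-- The cost functional `J(x₀, u)`. -/
noncomputable def cost (𝒮 : Setup Ω n m N) (μ : Measure Ω) (x₀ : Fin n → ℝ)
    (u : ℕ → Ω → Fin m → ℝ) : ℝ :=
  ∫ ω, ((∑ t ∈ Finset.range N,
      (traj 𝒮 x₀ u t ω ⬝ᵥ (𝒮.Q t).mulVec (traj 𝒮 x₀ u t ω)
        + 2 * (u t ω ⬝ᵥ (𝒮.S t).mulVec (traj 𝒮 x₀ u t ω))
        + u t ω ⬝ᵥ (𝒮.R t).mulVec (u t ω)
        + 2 * (traj 𝒮 x₀ u t ω ⬝ᵥ 𝒮.q t ω)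
        + 2 * (u t ω ⬝ᵥ 𝒮.rho t ω)))
    + traj 𝒮 x₀ u N ω ⬝ᵥ 𝒮.H.mulVec (traj 𝒮 x₀ u N ω)
    + 2 * (traj 𝒮 x₀ u N ω ⬝ᵥ 𝒮.g ω)) ∂μ

/-- `u` is an open-loop optimal control at the initial state `x₀`. -/
def OpenLoopOptimal (𝒮 : Setup Ω n m N) (μ : Measure Ω) (x₀ : Fin n → ℝ)
    (u : ℕ → Ω → Fin m → ℝ) : Prop :=
  Admissible 𝒮 μ u ∧ ∀ u', Admissible 𝒮 μ u' → cost 𝒮 μ x₀ u ≤ cost 𝒮 μ x₀ u'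

/-- The homogeneous problem: all the random coefficients `b, σ, q, ρ, g` are set to zero. -/
def homog (𝒮 : Setup Ω n m N) : Setup Ω n m N :=
  { 𝒮 with b := fun _ _ => 0, sig := fun _ _ => 0, q := fun _ _ => 0,
           rho := fun _ _ => 0, g := fun _ => 0 }

/-- The closed-loop state under a feedback pair `(K, v)`. -/
def cltraj (𝒮 : Setup Ω n m N) (K : ℕ → Matrix (Fin m) (Fin n) ℝ)
    (v : ℕ → Ω → Fin m → ℝ) (x₀ : Fin n → ℝ) : ℕ → Ω → Fin n → ℝ
  | 0 => fun _ => x₀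
  | t + 1 => fun ω =>
      (𝒮.A t + 𝒮.B t * K t).mulVec (cltraj 𝒮 K v x₀ t ω) + (𝒮.B t).mulVec (v t ω) + 𝒮.b t ω
        + 𝒮.w t ω • ((𝒮.C t + 𝒮.D t * K t).mulVec (cltraj 𝒮 K v x₀ t ω)
            + (𝒮.D t).mulVec (v t ω) + 𝒮.sig t ω)

/-- The outcome control `u_t = K_t x_t + v_t` of a feedback pair `(K, v)` at `x₀`. -/
def outcome (𝒮 : Setup Ω n m N) (K : ℕ → Matrix (Fin m) (Fin n) ℝ)
    (v : ℕ → Ω → Fin m → ℝ) (x₀ : Fin n → ℝ) : ℕ → Ω → Fin m → ℝ :=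
  fun t ω => (K t).mulVec (cltraj 𝒮 K v x₀ t ω) + v t ω

/-- A closed-loop strategy: deterministic gains `K_t` and adapted square-integrable `v_t`. -/
def ClosedLoopStrategy (𝒮 : Setup Ω n m N) (μ : Measure Ω)
    (_K : ℕ → Matrix (Fin m) (Fin n) ℝ) (v : ℕ → Ω → Fin m → ℝ) : Prop :=
  ∀ t, t < N → Measurable[Filt 𝒮 t] (v t) ∧ MemLp (v t) 2 μ

/-- `(K, v)` is a closed-loop optimal strategy. -/
def ClosedLoopOptimal (𝒮 : Setup Ω n m N) (μ : Measure Ω)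
    (K : ℕ → Matrix (Fin m) (Fin n) ℝ) (v : ℕ → Ω → Fin m → ℝ) : Prop :=
  ClosedLoopStrategy 𝒮 μ K v ∧
  ∀ x₀ u, Admissible 𝒮 μ u → cost 𝒮 μ x₀ (outcome 𝒮 K v x₀) ≤ cost 𝒮 μ x₀ u

/-- `R̂_t = R_t + B_tᵀ P_{t+1} B_t + D_tᵀ P_{t+1} D_t`. -/
def Rhat (𝒮 : Setup Ω n m N) (P : ℕ → Matrix (Fin n) (Fin n) ℝ) (t : ℕ) :
    Matrix (Fin m) (Fin m) ℝ :=
  𝒮.R t + (𝒮.B t)ᵀ * P (t + 1) * 𝒮.B t + (𝒮.D t)ᵀ * P (t + 1) * 𝒮.D t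


section Aux

variable {μ : Measure Ω}

/-! ### Trivial facts about `homog` -/

@[simp] lemma homog_w (𝒮 : Setup Ω n m N) : (homog 𝒮).w = 𝒮.w := rfl
@[simp] lemma homog_A (𝒮 : Setup Ω n m N) : (homog 𝒮).A = 𝒮.A := rfl
@[simp] lemma homog_B (𝒮 : Setup Ω n m N) : (homog 𝒮).B = 𝒮.B := rfl
@[simp] lemma homog_C (𝒮 : Setup Ω n m N) : (homog 𝒮).C = 𝒮.C := rfl
@[simp] lemma homog_D (𝒮 : Setup Ω n m N) : (homog 𝒮).D = 𝒮.D := rfl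
@[simp] lemma homog_Q (𝒮 : Setup Ω n m N) : (homog 𝒮).Q = 𝒮.Q := rfl
@[simp] lemma homog_S (𝒮 : Setup Ω n m N) : (homog 𝒮).S = 𝒮.S := rfl
@[simp] lemma homog_R (𝒮 : Setup Ω n m N) : (homog 𝒮).R = 𝒮.R := rfl
@[simp] lemma homog_H (𝒮 : Setup Ω n m N) : (homog 𝒮).H = 𝒮.H := rfl
@[simp] lemma homog_b (𝒮 : Setup Ω n m N) (t : ℕ) (ω : Ω) : (homog 𝒮).b t ω = 0 := rfl
@[simp] lemma homog_sig (𝒮 : Setup Ω n m N) (t : ℕ) (ω : Ω) : (homog 𝒮).sig t ω = 0 := rfl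
@[simp] lemma homog_q (𝒮 : Setup Ω n m N) (t : ℕ) (ω : Ω) : (homog 𝒮).q t ω = 0 := rfl
@[simp] lemma homog_rho (𝒮 : Setup Ω n m N) (t : ℕ) (ω : Ω) : (homog 𝒮).rho t ω = 0 := rfl
@[simp] lemma homog_g (𝒮 : Setup Ω n m N) (ω : Ω) : (homog 𝒮).g ω = 0 := rfl

lemma homog_homog (𝒮 : Setup Ω n m N) : homog (homog 𝒮) = homog 𝒮 := rfl

lemma Filt_homog (𝒮 : Setup Ω n m N) : Filt (homog 𝒮) = Filt 𝒮 := rfl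

lemma Admissible_homog (𝒮 : Setup Ω n m N) (u : ℕ → Ω → Fin m → ℝ) :
    Admissible (homog 𝒮) μ u ↔ Admissible 𝒮 μ u := Iff.rfl

/-! ### Filtration basics -/

lemma Filt_le_ambient (𝒮 : Setup Ω n m N) {t : ℕ} (ht : t ≤ N)
    (hw : ∀ s, s < N → Measurable (𝒮.w s)) :
    Filt 𝒮 t ≤ (inferInstance : MeasurableSpace Ω) := by
  refine iSup₂_le fun i hi => ?_
  exact measurable_iff_comap_le.1 (hw i (lt_of_lt_of_le (Finset.mem_range.1 hi) ht))

lemma Filt_mono (𝒮 : Setup Ω n m N) {s t : ℕ} (hst : s ≤ t) : Filt 𝒮 s ≤ Filt 𝒮 t := by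
  refine iSup₂_le fun i hi => ?_
  exact le_iSup₂ (f := fun i (_ : i ∈ Finset.range t) => MeasurableSpace.comap (𝒮.w i) inferInstance)
    i (Finset.mem_range.2 (lt_of_lt_of_le (Finset.mem_range.1 hi) hst))

lemma w_meas_Filt (𝒮 : Setup Ω n m N) (t : ℕ) : Measurable[Filt 𝒮 (t + 1)] (𝒮.w t) := by
  refine measurable_iff_comap_le.2 ?_
  exact le_iSup₂ (f := fun i (_ : i ∈ Finset.range (t + 1)) =>
    MeasurableSpace.comap (𝒮.w i) inferInstance) t (Finset.self_mem_range_succ t)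

/-! ### Componentwise measurability / integrability helpers -/

lemma meas_comp {k : ℕ} {m' : MeasurableSpace Ω} {f : Ω → Fin k → ℝ}
    (hf : Measurable[m'] f) (i : Fin k) : Measurable[m'] fun ω => f ω i :=
  (measurable_pi_apply i).comp hf

lemma memℒp_comp {k : ℕ} {f : Ω → Fin k → ℝ} (hf : MemLp f 2 μ) (i : Fin k) :
    MemLp (fun ω => f ω i) 2 μ := by
  refine hf.of_le ((continuous_apply i).comp_aestronglyMeasurable hf.aestronglyMeasurable) ?_
  exact Filter.Eventually.of_forall fun ω => norm_le_pi_norm (f ω) i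

lemma L2mul {f g : Ω → ℝ} (hf : MemLp f 2 μ) (hg : MemLp g 2 μ) :
    Integrable (fun ω => f ω * g ω) μ := by
  have h : MemLp (f • g) 1 μ := hg.smul hf
  exact memLp_one_iff_integrable.1 h

lemma integrable_dotP {k : ℕ} {f g : Ω → Fin k → ℝ}
    (hf : ∀ i, MemLp (fun ω => f ω i) 2 μ) (hg : ∀ i, MemLp (fun ω => g ω i) 2 μ) :
    Integrable (fun ω => f ω ⬝ᵥ g ω) μ := by
  have : (fun ω => f ω ⬝ᵥ g ω) = fun ω => ∑ i, f ω i * g ω i := by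
    funext ω; rfl
  rw [this]
  exact integrable_finset_sum _ fun i _ => L2mul (hf i) (hg i)

lemma integrable_dotM {k l : ℕ} (M : Matrix (Fin k) (Fin l) ℝ) {f : Ω → Fin k → ℝ}
    {g : Ω → Fin l → ℝ}
    (hf : ∀ i, MemLp (fun ω => f ω i) 2 μ) (hg : ∀ i, MemLp (fun ω => g ω i) 2 μ) :
    Integrable (fun ω => f ω ⬝ᵥ M.mulVec (g ω)) μ := by
  have : (fun ω => f ω ⬝ᵥ M.mulVec (g ω)) = fun ω => ∑ i, ∑ j, M i j * (f ω i * g ω j) := by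
    funext ω
    simp only [dotProduct, Matrix.mulVec, Finset.mul_sum]
    exact Finset.sum_congr rfl fun i _ => Finset.sum_congr rfl fun j _ => by ring
  rw [this]
  exact integrable_finset_sum _ fun i _ => integrable_finset_sum _ fun j _ =>
    (L2mul (hf i) (hg j)).const_mul _

lemma dot_symm {k : ℕ} {M : Matrix (Fin k) (Fin k) ℝ} (hM : M.IsSymm) (a b : Fin k → ℝ) :
    a ⬝ᵥ M.mulVec b = b ⬝ᵥ M.mulVec a := by
  rw [Matrix.dotProduct_mulVec, ← Matrix.mulVec_transpose, hM.eq, dotProduct_comm]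

end Aux
section Aux2

variable {μ : Measure Ω}

/-! ### Linearity of the trajectory -/

lemma traj_add (𝒮 : Setup Ω n m N) (x₁ x₂ : Fin n → ℝ) (u₁ u₂ : ℕ → Ω → Fin m → ℝ) :
    ∀ t ω, traj 𝒮 (x₁ + x₂) (fun t ω => u₁ t ω + u₂ t ω) t ω
      = traj 𝒮 x₁ u₁ t ω + traj (homog 𝒮) x₂ u₂ t ω := by
  intro t
  induction t with
  | zero => intro ω; rfl
  | succ t ih =>
    intro ω
    show (𝒮.A t).mulVec (traj 𝒮 (x₁ + x₂) (fun t ω => u₁ t ω + u₂ t ω) t ω)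
        + (𝒮.B t).mulVec (u₁ t ω + u₂ t ω) + 𝒮.b t ω
        + 𝒮.w t ω • ((𝒮.C t).mulVec (traj 𝒮 (x₁ + x₂) (fun t ω => u₁ t ω + u₂ t ω) t ω)
          + (𝒮.D t).mulVec (u₁ t ω + u₂ t ω) + 𝒮.sig t ω) = _
    rw [ih]
    show _ = ((𝒮.A t).mulVec (traj 𝒮 x₁ u₁ t ω) + (𝒮.B t).mulVec (u₁ t ω) + 𝒮.b t ω
        + 𝒮.w t ω • ((𝒮.C t).mulVec (traj 𝒮 x₁ u₁ t ω) + (𝒮.D t).mulVec (u₁ t ω) + 𝒮.sig t ω))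
      + ((𝒮.A t).mulVec (traj (homog 𝒮) x₂ u₂ t ω) + (𝒮.B t).mulVec (u₂ t ω) + 0
        + 𝒮.w t ω • ((𝒮.C t).mulVec (traj (homog 𝒮) x₂ u₂ t ω) + (𝒮.D t).mulVec (u₂ t ω) + 0))
    simp only [Matrix.mulVec_add, smul_add, add_zero]
    abel

lemma traj_smul (𝒮 : Setup Ω n m N) (c : ℝ) (v : ℕ → Ω → Fin m → ℝ) :
    ∀ t ω, traj (homog 𝒮) 0 (fun t ω => c • v t ω) t ω = c • traj (homog 𝒮) 0 v t ω := by
  intro t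
  induction t with
  | zero => intro ω; show (0 : Fin n → ℝ) = c • (0 : Fin n → ℝ); rw [smul_zero]
  | succ t ih =>
    intro ω
    show (𝒮.A t).mulVec (traj (homog 𝒮) 0 (fun t ω => c • v t ω) t ω)
        + (𝒮.B t).mulVec (c • v t ω) + 0
        + 𝒮.w t ω • ((𝒮.C t).mulVec (traj (homog 𝒮) 0 (fun t ω => c • v t ω) t ω)
          + (𝒮.D t).mulVec (c • v t ω) + 0)
      = c • ((𝒮.A t).mulVec (traj (homog 𝒮) 0 v t ω) + (𝒮.B t).mulVec (v t ω) + 0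
        + 𝒮.w t ω • ((𝒮.C t).mulVec (traj (homog 𝒮) 0 v t ω) + (𝒮.D t).mulVec (v t ω) + 0))
    rw [ih]
    simp only [Matrix.mulVec_smul, add_zero, smul_add]
    simp only [smul_comm (𝒮.w t ω) c]

/-! ### Independence of the noise from the past -/

lemma indep_w (𝒮 : Setup Ω n m N) (hval : Valid 𝒮 μ) {t : ℕ} (ht : t < N) :
    ProbabilityTheory.Indep (Filt 𝒮 t)
      (MeasurableSpace.comap (𝒮.w t) inferInstance) μ := by
  obtain ⟨hw, hind, -⟩ := hval
  set s : Fin N → MeasurableSpace Ω := fun i => MeasurableSpace.comap (𝒮.w i) inferInstance with hs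
  have h_le : ∀ i, s i ≤ (inferInstance : MeasurableSpace Ω) :=
    fun i => measurable_iff_comap_le.1 (hw i i.isLt)
  have hi : ProbabilityTheory.iIndep s μ := hind.iIndep
  have h := ProbabilityTheory.indep_biSup_compl h_le hi {i : Fin N | (i : ℕ) < t}
  refine ProbabilityTheory.indep_of_indep_of_le_left
    (ProbabilityTheory.indep_of_indep_of_le_right h ?_) ?_
  · have hmem : (⟨t, ht⟩ : Fin N) ∈ {i : Fin N | (i : ℕ) < t}ᶜ := by simp
    exact le_iSup₂ (f := fun i (_ : i ∈ {i : Fin N | (i : ℕ) < t}ᶜ) => s i) _ hmem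
  · refine iSup₂_le fun i hi' => ?_
    have hilt : i < t := Finset.mem_range.1 hi'
    exact le_iSup₂ (f := fun i (_ : i ∈ {i : Fin N | (i : ℕ) < t}) => s i)
      (⟨i, hilt.trans ht⟩ : Fin N) hilt

lemma indepFun_w (𝒮 : Setup Ω n m N) (hval : Valid 𝒮 μ) {t : ℕ} (ht : t < N)
    {Y : Ω → ℝ} (hY : Measurable[Filt 𝒮 t] Y) :
    ProbabilityTheory.IndepFun (𝒮.w t) Y μ := by
  refine (ProbabilityTheory.IndepFun_iff_Indep _ _ _).2 ?_
  exact ProbabilityTheory.indep_of_indep_of_le_right (indep_w 𝒮 hval ht).symm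
    (measurable_iff_comap_le.1 hY)

lemma w_sq_integrable (𝒮 : Setup Ω n m N) (hval : Valid 𝒮 μ) {t : ℕ} (ht : t < N) :
    Integrable (fun ω => (𝒮.w t ω) ^ 2) μ := by
  by_contra h
  have := hval.2.2.2.1 t ht
  rw [integral_undef h] at this
  exact one_ne_zero this.symm

lemma w_memℒp (𝒮 : Setup Ω n m N) (hval : Valid 𝒮 μ) {t : ℕ} (ht : t < N) :
    MemLp (𝒮.w t) 2 μ :=
  (memLp_two_iff_integrable_sq (hval.1 t ht).aestronglyMeasurable).2 (w_sq_integrable 𝒮 hval ht)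

lemma wy_memℒp (𝒮 : Setup Ω n m N) (hval : Valid 𝒮 μ) {t : ℕ} (ht : t < N)
    {Y : Ω → ℝ} (hYm : Measurable[Filt 𝒮 t] Y) (hY : MemLp Y 2 μ) :
    MemLp (fun ω => 𝒮.w t ω * Y ω) 2 μ := by
  have hwm : Measurable (𝒮.w t) := hval.1 t ht
  have hYm' : Measurable Y := hYm.mono (Filt_le_ambient 𝒮 ht.le hval.1) le_rfl
  have hind : ProbabilityTheory.IndepFun (𝒮.w t) Y μ := indepFun_w 𝒮 hval ht hYm
  have hind2 : ProbabilityTheory.IndepFun (fun ω => (𝒮.w t ω) ^ 2) (fun ω => (Y ω) ^ 2) μ :=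
    hind.comp (measurable_id.pow_const 2) (measurable_id.pow_const 2)
  have h2 : Integrable (fun ω => (Y ω) ^ 2) μ :=
    (memLp_two_iff_integrable_sq hY.aestronglyMeasurable).1 hY
  have hprod : Integrable ((fun ω => (𝒮.w t ω) ^ 2) * fun ω => (Y ω) ^ 2) μ :=
    hind2.integrable_mul (w_sq_integrable 𝒮 hval ht) h2
  refine (memLp_two_iff_integrable_sq (hwm.mul hYm').aestronglyMeasurable).2 ?_
  have : (fun ω => (𝒮.w t ω * Y ω) ^ 2)
      = (fun ω => (𝒮.w t ω) ^ 2) * fun ω => (Y ω) ^ 2 := by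
    funext ω; simp [mul_pow]
  show Integrable (fun ω => (𝒮.w t ω * Y ω) ^ 2) μ
  rw [this]
  exact hprod

end Aux2
section Aux3

variable {μ : Measure Ω} [IsFiniteMeasure μ]

lemma meas_addv {k : ℕ} {m' : MeasurableSpace Ω} {f g : Ω → Fin k → ℝ}
    (hf : Measurable[m'] f) (hg : Measurable[m'] g) :
    Measurable[m'] fun ω => f ω + g ω :=
  measurable_pi_iff.2 fun i => (meas_comp hf i).add (meas_comp hg i)

lemma meas_subv {k : ℕ} {m' : MeasurableSpace Ω} {f g : Ω → Fin k → ℝ}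
    (hf : Measurable[m'] f) (hg : Measurable[m'] g) :
    Measurable[m'] fun ω => f ω - g ω :=
  measurable_pi_iff.2 fun i => (meas_comp hf i).sub (meas_comp hg i)

lemma meas_smulv {k : ℕ} {m' : MeasurableSpace Ω} {c : Ω → ℝ} {f : Ω → Fin k → ℝ}
    (hc : Measurable[m'] c) (hf : Measurable[m'] f) :
    Measurable[m'] fun ω => c ω • f ω :=
  measurable_pi_iff.2 fun i => hc.mul (meas_comp hf i)

lemma meas_mulVec {k l : ℕ} {m' : MeasurableSpace Ω} (M : Matrix (Fin k) (Fin l) ℝ)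
    {f : Ω → Fin l → ℝ} (hf : Measurable[m'] f) :
    Measurable[m'] fun ω => M.mulVec (f ω) := by
  refine measurable_pi_iff.2 fun i => ?_
  have h : (fun ω => M.mulVec (f ω) i) = fun ω => ∑ j, M i j * f ω j := rfl
  exact h ▸ Finset.measurable_sum _ fun j _ => (meas_comp hf j).const_mul _

lemma memℒp_mulVec {k l : ℕ} (M : Matrix (Fin k) (Fin l) ℝ) {f : Ω → Fin l → ℝ}
    (hf : ∀ j, MemLp (fun ω => f ω j) 2 μ) (i : Fin k) :
    MemLp (fun ω => M.mulVec (f ω) i) 2 μ := by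
  have h : (fun ω => M.mulVec (f ω) i) = fun ω => ∑ j, M i j * f ω j := rfl
  rw [h]
  exact memLp_finset_sum _ fun j _ => (hf j).const_mul _

lemma valid_homog (𝒮 : Setup Ω n m N) (h : Valid 𝒮 μ) : Valid (homog 𝒮) μ := by
  obtain ⟨h1, h2, h3, h4, -, -, -, -, -, h10, h11⟩ := h
  exact ⟨h1, h2, h3, h4,
    fun t _ => ⟨measurable_const, memLp_const 0⟩,
    fun t _ => ⟨measurable_const, memLp_const 0⟩,
    fun t _ => ⟨measurable_const, memLp_const 0⟩,
    fun t _ => ⟨measurable_const, memLp_const 0⟩,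
    ⟨measurable_const, memLp_const 0⟩, h10, h11⟩

lemma adm_add_smul {𝒮 : Setup Ω n m N} {u v : ℕ → Ω → Fin m → ℝ}
    (hu : Admissible 𝒮 μ u) (hv : Admissible 𝒮 μ v) (c : ℝ) :
    Admissible 𝒮 μ (fun t ω => u t ω + c • v t ω) := fun t ht =>
  ⟨meas_addv (hu t ht).1 (meas_smulv measurable_const (hv t ht).1),
    (hu t ht).2.add ((hv t ht).2.const_smul c)⟩

lemma adm_sub {𝒮 : Setup Ω n m N} {u v : ℕ → Ω → Fin m → ℝ}
    (hu : Admissible 𝒮 μ u) (hv : Admissible 𝒮 μ v) :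
    Admissible 𝒮 μ (fun t ω => u t ω - v t ω) := fun t ht =>
  ⟨meas_subv (hu t ht).1 (hv t ht).1, (hu t ht).2.sub (hv t ht).2⟩

/-! ### Adaptedness and square integrability of the trajectory -/

lemma traj_good (𝒮 : Setup Ω n m N) (hval : Valid 𝒮 μ) {u : ℕ → Ω → Fin m → ℝ}
    (hu : Admissible 𝒮 μ u) (x₀ : Fin n → ℝ) :
    ∀ t, t ≤ N → Measurable[Filt 𝒮 t] (traj 𝒮 x₀ u t)
      ∧ ∀ i, MemLp (fun ω => traj 𝒮 x₀ u t ω i) 2 μ := by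
  intro t
  induction t with
  | zero => exact fun _ => ⟨measurable_const, fun i => memLp_const _⟩
  | succ t ih =>
    intro ht
    have ht' : t < N := Nat.lt_of_lt_of_le (Nat.lt_succ_self t) ht
    obtain ⟨hm, hl⟩ := ih ht'.le
    have hum := (hu t ht').1
    have hul : ∀ j, MemLp (fun ω => u t ω j) 2 μ := fun j => memℒp_comp (hu t ht').2 j
    have hbm := (hval.2.2.2.2.1 t ht').1
    have hbl : ∀ i, MemLp (fun ω => 𝒮.b t ω i) 2 μ :=
      fun i => memℒp_comp (hval.2.2.2.2.1 t ht').2 i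
    have hsm := (hval.2.2.2.2.2.1 t ht').1
    have hsl : ∀ i, MemLp (fun ω => 𝒮.sig t ω i) 2 μ :=
      fun i => memℒp_comp (hval.2.2.2.2.2.1 t ht').2 i
    have hYm : Measurable[Filt 𝒮 t] fun ω =>
        (𝒮.C t).mulVec (traj 𝒮 x₀ u t ω) + (𝒮.D t).mulVec (u t ω) + 𝒮.sig t ω :=
      meas_addv (meas_addv (meas_mulVec _ hm) (meas_mulVec _ hum)) hsm
    have hYl : ∀ i, MemLp (fun ω =>
        ((𝒮.C t).mulVec (traj 𝒮 x₀ u t ω) + (𝒮.D t).mulVec (u t ω) + 𝒮.sig t ω) i) 2 μ :=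
      fun i => ((memℒp_mulVec _ hl i).add (memℒp_mulVec _ hul i)).add (hsl i)
    constructor
    · have hmono : Filt 𝒮 t ≤ Filt 𝒮 (t + 1) := Filt_mono 𝒮 (Nat.le_succ t)
      have hx1 := hm.mono hmono le_rfl
      have hu1 := hum.mono hmono le_rfl
      have hb1 := hbm.mono hmono le_rfl
      have hY1 := hYm.mono hmono le_rfl
      exact meas_addv (meas_addv (meas_addv (meas_mulVec _ hx1) (meas_mulVec _ hu1)) hb1)
        (meas_smulv (w_meas_Filt 𝒮 t) hY1)
    · intro i
      have hrfl : (fun ω => traj 𝒮 x₀ u (t + 1) ω i)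
          = fun ω => ((𝒮.A t).mulVec (traj 𝒮 x₀ u t ω) i + (𝒮.B t).mulVec (u t ω) i
              + 𝒮.b t ω i)
            + 𝒮.w t ω * ((𝒮.C t).mulVec (traj 𝒮 x₀ u t ω) + (𝒮.D t).mulVec (u t ω)
              + 𝒮.sig t ω) i := rfl
      rw [hrfl]
      exact (((memℒp_mulVec _ hl i).add (memℒp_mulVec _ hul i)).add (hbl i)).add
        (wy_memℒp 𝒮 hval ht' (meas_comp hYm i) (hYl i))

end Aux3
section Aux4

variable {μ : Measure Ω} [IsFiniteMeasure μ]

/-- The pointwise integrand of the cost functional. -/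
noncomputable def integrand (𝒮 : Setup Ω n m N) (x₀ : Fin n → ℝ)
    (u : ℕ → Ω → Fin m → ℝ) (ω : Ω) : ℝ :=
  (∑ t ∈ Finset.range N,
      (traj 𝒮 x₀ u t ω ⬝ᵥ (𝒮.Q t).mulVec (traj 𝒮 x₀ u t ω)
        + 2 * (u t ω ⬝ᵥ (𝒮.S t).mulVec (traj 𝒮 x₀ u t ω))
        + u t ω ⬝ᵥ (𝒮.R t).mulVec (u t ω)
        + 2 * (traj 𝒮 x₀ u t ω ⬝ᵥ 𝒮.q t ω)
        + 2 * (u t ω ⬝ᵥ 𝒮.rho t ω)))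
    + traj 𝒮 x₀ u N ω ⬝ᵥ 𝒮.H.mulVec (traj 𝒮 x₀ u N ω)
    + 2 * (traj 𝒮 x₀ u N ω ⬝ᵥ 𝒮.g ω)

lemma cost_eq_integral (𝒮 : Setup Ω n m N) (μ : Measure Ω) (x₀ : Fin n → ℝ)
    (u : ℕ → Ω → Fin m → ℝ) : cost 𝒮 μ x₀ u = ∫ ω, integrand 𝒮 x₀ u ω ∂μ := rfl

/-- The cross (bilinear) term in the expansion of the cost. -/
noncomputable def crossG (𝒮 : Setup Ω n m N) (x₀ : Fin n → ℝ)
    (u v : ℕ → Ω → Fin m → ℝ) (ω : Ω) : ℝ :=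
  (∑ t ∈ Finset.range N,
      (2 * (traj 𝒮 x₀ u t ω ⬝ᵥ (𝒮.Q t).mulVec (traj (homog 𝒮) 0 v t ω))
        + 2 * (u t ω ⬝ᵥ (𝒮.S t).mulVec (traj (homog 𝒮) 0 v t ω))
        + 2 * (v t ω ⬝ᵥ (𝒮.S t).mulVec (traj 𝒮 x₀ u t ω))
        + 2 * (v t ω ⬝ᵥ (𝒮.R t).mulVec (u t ω))
        + 2 * (traj (homog 𝒮) 0 v t ω ⬝ᵥ 𝒮.q t ω)
        + 2 * (v t ω ⬝ᵥ 𝒮.rho t ω)))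
    + 2 * (traj 𝒮 x₀ u N ω ⬝ᵥ 𝒮.H.mulVec (traj (homog 𝒮) 0 v N ω))
    + 2 * (traj (homog 𝒮) 0 v N ω ⬝ᵥ 𝒮.g ω)

lemma integrand_integrable (𝒮 : Setup Ω n m N) (hval : Valid 𝒮 μ)
    {u : ℕ → Ω → Fin m → ℝ} (hu : Admissible 𝒮 μ u) (x₀ : Fin n → ℝ) :
    Integrable (integrand 𝒮 x₀ u) μ := by
  have hx : ∀ t, t ≤ N → ∀ i, MemLp (fun ω => traj 𝒮 x₀ u t ω i) 2 μ :=
    fun t ht => (traj_good 𝒮 hval hu x₀ t ht).2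
  unfold integrand
  refine Integrable.add (Integrable.add (integrable_finset_sum _ fun t ht' => ?_) ?_) ?_
  · have ht : t < N := Finset.mem_range.1 ht'
    have hxt := hx t ht.le
    have hut : ∀ j, MemLp (fun ω => u t ω j) 2 μ := fun j => memℒp_comp (hu t ht).2 j
    have hqt : ∀ i, MemLp (fun ω => 𝒮.q t ω i) 2 μ :=
      fun i => memℒp_comp (hval.2.2.2.2.2.2.1 t ht).2 i
    have hrt : ∀ i, MemLp (fun ω => 𝒮.rho t ω i) 2 μ :=
      fun i => memℒp_comp (hval.2.2.2.2.2.2.2.1 t ht).2 i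
    exact ((((integrable_dotM _ hxt hxt).add ((integrable_dotM _ hut hxt).const_mul 2)).add
      (integrable_dotM _ hut hut)).add ((integrable_dotP hxt hqt).const_mul 2)).add
      ((integrable_dotP hut hrt).const_mul 2)
  · exact integrable_dotM _ (hx N le_rfl) (hx N le_rfl)
  · exact (integrable_dotP (hx N le_rfl)
      (fun i => memℒp_comp hval.2.2.2.2.2.2.2.2.1.2 i)).const_mul 2

lemma crossG_integrable (𝒮 : Setup Ω n m N) (hval : Valid 𝒮 μ)
    {u v : ℕ → Ω → Fin m → ℝ} (hu : Admissible 𝒮 μ u) (hv : Admissible 𝒮 μ v)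
    (x₀ : Fin n → ℝ) : Integrable (crossG 𝒮 x₀ u v) μ := by
  have hx : ∀ t, t ≤ N → ∀ i, MemLp (fun ω => traj 𝒮 x₀ u t ω i) 2 μ :=
    fun t ht => (traj_good 𝒮 hval hu x₀ t ht).2
  have hy : ∀ t, t ≤ N → ∀ i, MemLp (fun ω => traj (homog 𝒮) 0 v t ω i) 2 μ :=
    fun t ht => (traj_good (homog 𝒮) (valid_homog 𝒮 hval)
      ((Admissible_homog 𝒮 v).2 hv) 0 t ht).2
  unfold crossG
  refine Integrable.add (Integrable.add (integrable_finset_sum _ fun t ht' => ?_) ?_) ?_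
  · have ht : t < N := Finset.mem_range.1 ht'
    have hxt := hx t ht.le
    have hyt := hy t ht.le
    have hut : ∀ j, MemLp (fun ω => u t ω j) 2 μ := fun j => memℒp_comp (hu t ht).2 j
    have hvt : ∀ j, MemLp (fun ω => v t ω j) 2 μ := fun j => memℒp_comp (hv t ht).2 j
    have hqt : ∀ i, MemLp (fun ω => 𝒮.q t ω i) 2 μ :=
      fun i => memℒp_comp (hval.2.2.2.2.2.2.1 t ht).2 i
    have hrt : ∀ i, MemLp (fun ω => 𝒮.rho t ω i) 2 μ :=
      fun i => memℒp_comp (hval.2.2.2.2.2.2.2.1 t ht).2 i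
    exact (((((integrable_dotM _ hxt hyt).const_mul 2).add
      ((integrable_dotM _ hut hyt).const_mul 2)).add
      ((integrable_dotM _ hvt hxt).const_mul 2)).add
      ((integrable_dotM _ hvt hut).const_mul 2)).add
      ((integrable_dotP hyt hqt).const_mul 2) |>.add ((integrable_dotP hvt hrt).const_mul 2)
  · exact (integrable_dotM _ (hx N le_rfl) (hy N le_rfl)).const_mul 2
  · exact (integrable_dotP (hy N le_rfl)
      (fun i => memℒp_comp hval.2.2.2.2.2.2.2.2.1.2 i)).const_mul 2

end Aux4
section Aux5

variable {μ : Measure Ω} [IsFiniteMeasure μ]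

lemma integrand_expand (𝒮 : Setup Ω n m N)
    (hQ : ∀ t, t < N → (𝒮.Q t).IsSymm) (hR : ∀ t, t < N → (𝒮.R t).IsSymm)
    (hH : 𝒮.H.IsSymm) (x₀ : Fin n → ℝ) (u v : ℕ → Ω → Fin m → ℝ) (c : ℝ) (ω : Ω) :
    integrand 𝒮 x₀ (fun t ω => u t ω + c • v t ω) ω
      = integrand 𝒮 x₀ u ω + c * crossG 𝒮 x₀ u v ω + c ^ 2 * integrand (homog 𝒮) 0 v ω := by
  have key : ∀ s, traj 𝒮 x₀ (fun t ω => u t ω + c • v t ω) s ω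
      = traj 𝒮 x₀ u s ω + c • traj (homog 𝒮) 0 v s ω := by
    intro s
    have h1 := traj_add 𝒮 x₀ 0 u (fun t ω => c • v t ω) s ω
    rw [add_zero] at h1
    rw [h1, traj_smul]
  have hstep : ∀ t ∈ Finset.range N,
      (traj 𝒮 x₀ (fun t ω => u t ω + c • v t ω) t ω ⬝ᵥ
          (𝒮.Q t).mulVec (traj 𝒮 x₀ (fun t ω => u t ω + c • v t ω) t ω)
        + 2 * ((u t ω + c • v t ω) ⬝ᵥ
            (𝒮.S t).mulVec (traj 𝒮 x₀ (fun t ω => u t ω + c • v t ω) t ω))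
        + (u t ω + c • v t ω) ⬝ᵥ (𝒮.R t).mulVec (u t ω + c • v t ω)
        + 2 * (traj 𝒮 x₀ (fun t ω => u t ω + c • v t ω) t ω ⬝ᵥ 𝒮.q t ω)
        + 2 * ((u t ω + c • v t ω) ⬝ᵥ 𝒮.rho t ω))
      = (traj 𝒮 x₀ u t ω ⬝ᵥ (𝒮.Q t).mulVec (traj 𝒮 x₀ u t ω)
          + 2 * (u t ω ⬝ᵥ (𝒮.S t).mulVec (traj 𝒮 x₀ u t ω))
          + u t ω ⬝ᵥ (𝒮.R t).mulVec (u t ω)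
          + 2 * (traj 𝒮 x₀ u t ω ⬝ᵥ 𝒮.q t ω)
          + 2 * (u t ω ⬝ᵥ 𝒮.rho t ω))
        + c * (2 * (traj 𝒮 x₀ u t ω ⬝ᵥ (𝒮.Q t).mulVec (traj (homog 𝒮) 0 v t ω))
          + 2 * (u t ω ⬝ᵥ (𝒮.S t).mulVec (traj (homog 𝒮) 0 v t ω))
          + 2 * (v t ω ⬝ᵥ (𝒮.S t).mulVec (traj 𝒮 x₀ u t ω))
          + 2 * (v t ω ⬝ᵥ (𝒮.R t).mulVec (u t ω))
          + 2 * (traj (homog 𝒮) 0 v t ω ⬝ᵥ 𝒮.q t ω)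
          + 2 * (v t ω ⬝ᵥ 𝒮.rho t ω))
        + c ^ 2 * (traj (homog 𝒮) 0 v t ω ⬝ᵥ (𝒮.Q t).mulVec (traj (homog 𝒮) 0 v t ω)
          + 2 * (v t ω ⬝ᵥ (𝒮.S t).mulVec (traj (homog 𝒮) 0 v t ω))
          + v t ω ⬝ᵥ (𝒮.R t).mulVec (v t ω)) := by
    intro t ht
    have ht' : t < N := Finset.mem_range.1 ht
    rw [key t]
    simp only [Matrix.mulVec_add, Matrix.mulVec_smul, dotProduct_add,
      add_dotProduct, dotProduct_smul, smul_dotProduct, smul_eq_mul]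
    rw [dot_symm (hQ t ht') (traj (homog 𝒮) 0 v t ω) (traj 𝒮 x₀ u t ω),
      dot_symm (hR t ht') (v t ω) (u t ω)]
    ring
  simp only [integrand, crossG, homog_Q, homog_S, homog_R, homog_H, homog_q, homog_rho,
    homog_g, dotProduct_zero, mul_zero, add_zero]
  rw [Finset.sum_congr rfl hstep]
  rw [Finset.sum_add_distrib, Finset.sum_add_distrib, ← Finset.mul_sum, ← Finset.mul_sum]
  rw [key N]
  simp only [Matrix.mulVec_add, Matrix.mulVec_smul, dotProduct_add,
    add_dotProduct, dotProduct_smul, smul_dotProduct, smul_eq_mul]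
  rw [dot_symm hH (traj (homog 𝒮) 0 v N ω) (traj 𝒮 x₀ u N ω)]
  ring

end Aux5
section Aux6

variable {μ : Measure Ω} [IsFiniteMeasure μ]

lemma cost_expand (𝒮 : Setup Ω n m N) (hval : Valid 𝒮 μ)
    {u v : ℕ → Ω → Fin m → ℝ} (hu : Admissible 𝒮 μ u) (hv : Admissible 𝒮 μ v)
    (x₀ : Fin n → ℝ) (c : ℝ) :
    cost 𝒮 μ x₀ (fun t ω => u t ω + c • v t ω)
      = cost 𝒮 μ x₀ u + c * (∫ ω, crossG 𝒮 x₀ u v ω ∂μ)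
        + c ^ 2 * cost (homog 𝒮) μ 0 v := by
  have hQ : ∀ t, t < N → (𝒮.Q t).IsSymm := fun t ht => (hval.2.2.2.2.2.2.2.2.2.1 t ht).1
  have hR : ∀ t, t < N → (𝒮.R t).IsSymm := fun t ht => (hval.2.2.2.2.2.2.2.2.2.1 t ht).2
  have hH : 𝒮.H.IsSymm := hval.2.2.2.2.2.2.2.2.2.2
  have h1 : Integrable (integrand 𝒮 x₀ u) μ := integrand_integrable 𝒮 hval hu x₀
  have h2 : Integrable (crossG 𝒮 x₀ u v) μ := crossG_integrable 𝒮 hval hu hv x₀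
  have h3 : Integrable (integrand (homog 𝒮) 0 v) μ :=
    integrand_integrable (homog 𝒮) (valid_homog 𝒮 hval) ((Admissible_homog 𝒮 v).2 hv) 0
  rw [cost_eq_integral, cost_eq_integral, cost_eq_integral]
  rw [integral_congr_ae (Filter.Eventually.of_forall fun ω =>
    integrand_expand 𝒮 hQ hR hH x₀ u v c ω)]
  have h2' : Integrable (fun ω => c * crossG 𝒮 x₀ u v ω) μ := h2.const_mul c
  have h12 : Integrable (fun ω => integrand 𝒮 x₀ u ω + c * crossG 𝒮 x₀ u v ω) μ := h1.add h2'
  have h3' : Integrable (fun ω => c ^ 2 * integrand (homog 𝒮) 0 v ω) μ := h3.const_mul (c ^ 2)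
  rw [integral_add h12 h3', integral_add h1 h2', integral_const_mul, integral_const_mul]

lemma crossG_add (𝒮 : Setup Ω n m N) (x₁ x₂ : Fin n → ℝ)
    (u₁ u₂ v : ℕ → Ω → Fin m → ℝ) (ω : Ω) :
    crossG 𝒮 (x₁ + x₂) (fun t ω => u₁ t ω + u₂ t ω) v ω
      = crossG 𝒮 x₁ u₁ v ω + crossG (homog 𝒮) x₂ u₂ v ω := by
  have key : ∀ s, traj 𝒮 (x₁ + x₂) (fun t ω => u₁ t ω + u₂ t ω) s ω
      = traj 𝒮 x₁ u₁ s ω + traj (homog 𝒮) x₂ u₂ s ω := fun s => traj_add 𝒮 x₁ x₂ u₁ u₂ s ω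
  have hstep : ∀ t ∈ Finset.range N,
      (2 * (traj 𝒮 (x₁ + x₂) (fun t ω => u₁ t ω + u₂ t ω) t ω ⬝ᵥ
            (𝒮.Q t).mulVec (traj (homog 𝒮) 0 v t ω))
        + 2 * ((u₁ t ω + u₂ t ω) ⬝ᵥ (𝒮.S t).mulVec (traj (homog 𝒮) 0 v t ω))
        + 2 * (v t ω ⬝ᵥ (𝒮.S t).mulVec (traj 𝒮 (x₁ + x₂) (fun t ω => u₁ t ω + u₂ t ω) t ω))
        + 2 * (v t ω ⬝ᵥ (𝒮.R t).mulVec (u₁ t ω + u₂ t ω))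
        + 2 * (traj (homog 𝒮) 0 v t ω ⬝ᵥ 𝒮.q t ω)
        + 2 * (v t ω ⬝ᵥ 𝒮.rho t ω))
      = (2 * (traj 𝒮 x₁ u₁ t ω ⬝ᵥ (𝒮.Q t).mulVec (traj (homog 𝒮) 0 v t ω))
          + 2 * (u₁ t ω ⬝ᵥ (𝒮.S t).mulVec (traj (homog 𝒮) 0 v t ω))
          + 2 * (v t ω ⬝ᵥ (𝒮.S t).mulVec (traj 𝒮 x₁ u₁ t ω))
          + 2 * (v t ω ⬝ᵥ (𝒮.R t).mulVec (u₁ t ω))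
          + 2 * (traj (homog 𝒮) 0 v t ω ⬝ᵥ 𝒮.q t ω)
          + 2 * (v t ω ⬝ᵥ 𝒮.rho t ω))
        + (2 * (traj (homog 𝒮) x₂ u₂ t ω ⬝ᵥ (𝒮.Q t).mulVec (traj (homog 𝒮) 0 v t ω))
          + 2 * (u₂ t ω ⬝ᵥ (𝒮.S t).mulVec (traj (homog 𝒮) 0 v t ω))
          + 2 * (v t ω ⬝ᵥ (𝒮.S t).mulVec (traj (homog 𝒮) x₂ u₂ t ω))
          + 2 * (v t ω ⬝ᵥ (𝒮.R t).mulVec (u₂ t ω))) := by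
    intro t _
    rw [key t]
    simp only [Matrix.mulVec_add, dotProduct_add, add_dotProduct]
    ring
  simp only [crossG, homog_homog, homog_Q, homog_S, homog_R, homog_H, homog_q, homog_rho,
    homog_g, dotProduct_zero, mul_zero, add_zero]
  rw [Finset.sum_congr rfl hstep, Finset.sum_add_distrib, key N]
  simp only [Matrix.mulVec_add, dotProduct_add, add_dotProduct]
  ring

lemma quad_zero {a b : ℝ} (h : ∀ c : ℝ, 0 ≤ c * b + c ^ 2 * a) : b = 0 ∧ 0 ≤ a := by
  have ha : 0 ≤ a := by nlinarith [h 1, h (-1)]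
  refine ⟨?_, ha⟩
  by_contra hb
  have hb2 : 0 < b * b := mul_self_pos.2 hb
  have hpos : (0 : ℝ) < a + 1 := by linarith
  set t : ℝ := 1 / (2 * (a + 1)) with htdef
  have ht : 0 < t := by positivity
  have hta : t * a < 1 := by
    rw [htdef, div_mul_eq_mul_div, div_lt_one (by linarith)]
    linarith
  have key := h (-(b * t))
  have hkey : -(b * t) * b + (-(b * t)) ^ 2 * a = t * (b * b) * (t * a - 1) := by ring
  rw [hkey] at key
  have hneg : t * (b * b) * (t * a - 1) < 0 :=
    mul_neg_of_pos_of_neg (mul_pos ht hb2) (by linarith)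
  linarith

end Aux6

/-- Lemma 5 / Lemma L4: open-loop solvability of Problem (SLQ) implies open-loop
solvability of the homogeneous Problem (SLQ)⁰. -/
theorem statement_14
    {Ω : Type} [MeasurableSpace Ω] {n m N : ℕ} (hN : 1 ≤ N)
    (𝒮 : Setup Ω n m N) (μ : Measure Ω) [IsProbabilityMeasure μ]
    (hvalid : Valid 𝒮 μ)
    (hsolv : ∀ x₀ : Fin n → ℝ, ∃ u, OpenLoopOptimal 𝒮 μ x₀ u) :
    ∀ x₀ : Fin n → ℝ, ∃ u, OpenLoopOptimal (homog 𝒮) μ x₀ u := by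
  intro x₀
  obtain ⟨us, husadm, husopt⟩ := hsolv x₀
  obtain ⟨uh, huhadm, huhopt⟩ := hsolv 0
  have hutadm : Admissible 𝒮 μ (fun t ω => us t ω - uh t ω) := adm_sub husadm huhadm
  refine ⟨fun t ω => us t ω - uh t ω, hutadm, ?_⟩
  intro v hv
  have hvadm : Admissible 𝒮 μ v := hv
  have hwadm : Admissible 𝒮 μ (fun t ω => v t ω - (us t ω - uh t ω)) := adm_sub hvadm hutadm
  set wv : ℕ → Ω → Fin m → ℝ := fun t ω => v t ω - (us t ω - uh t ω) with hwv
  have hexp1 : ∀ c : ℝ, 0 ≤ c * (∫ ω, crossG 𝒮 x₀ us wv ω ∂μ)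
      + c ^ 2 * cost (homog 𝒮) μ 0 wv := by
    intro c
    have h := husopt (fun t ω => us t ω + c • wv t ω) (adm_add_smul husadm hwadm c)
    rw [cost_expand 𝒮 hvalid husadm hwadm x₀ c] at h
    linarith
  have hexp2 : ∀ c : ℝ, 0 ≤ c * (∫ ω, crossG 𝒮 0 uh wv ω ∂μ)
      + c ^ 2 * cost (homog 𝒮) μ 0 wv := by
    intro c
    have h := huhopt (fun t ω => uh t ω + c • wv t ω) (adm_add_smul huhadm hwadm c)
    rw [cost_expand 𝒮 hvalid huhadm hwadm 0 c] at h
    linarith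
  obtain ⟨hb1, ha⟩ := quad_zero hexp1
  obtain ⟨hb2, -⟩ := quad_zero hexp2
  have hpt : ∀ ω, crossG (homog 𝒮) x₀ (fun t ω => us t ω - uh t ω) wv ω
      = crossG 𝒮 x₀ us wv ω - crossG 𝒮 0 uh wv ω := by
    intro ω
    have h := crossG_add 𝒮 0 x₀ uh (fun t ω => us t ω - uh t ω) wv ω
    rw [zero_add] at h
    have h2 : (fun t ω => uh t ω + (us t ω - uh t ω)) = us := by
      funext t ω; abel
    rw [h2] at h
    linarith [h]
  have hzero : (∫ ω, crossG (homog 𝒮) x₀ (fun t ω => us t ω - uh t ω) wv ω ∂μ) = 0 := by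
    rw [integral_congr_ae (Filter.Eventually.of_forall hpt),
      integral_sub (crossG_integrable 𝒮 hvalid husadm hwadm x₀)
        (crossG_integrable 𝒮 hvalid huhadm hwadm 0), hb1, hb2, sub_zero]
  have hfin := cost_expand (homog 𝒮) (valid_homog 𝒮 hvalid) hutadm hwadm x₀ 1
  have hcv : (fun t ω => (us t ω - uh t ω) + (1 : ℝ) • wv t ω) = v := by
    funext t ω
    simp only [hwv, one_smul]
    abel
  rw [hcv] at hfin
  rw [homog_homog] at hfin
  rw [hfin, hzero]
  have hone : (1 : ℝ) ^ 2 = 1 := one_pow 2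
  nlinarith [ha]
end SLQ
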